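/- Let G be a group of exponent dividing 4, metabelian, and nilpotent of class at most 4. Then for all a, b ∈ G: (a⁻¹, b)² = (a,b)² and (a, b⁻¹)² = (a,b)². -/

import Mathlib

open scoped commutatorElement


/-- The commutator `(a,b) = a⁻¹ * b⁻¹ * a * b` used in the paper. -/
def paperComm {G : Type*} [Group G] (a b : G) : G := a⁻¹ * b⁻¹ * a * b

private lemma pow_four_expand {G : Type*} [Group G] (x : G) : x ^ 4 = x * x * x * x := by
  rw [show (4 : ℕ) = 3 + 1 from rfl, pow_succ, show (3 : ℕ) = 2 + 1 from rfl, pow_succ,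
    show (2 : ℕ) = 1 + 1 from rfl, pow_succ, pow_one]

/-- The key lemma: in a metabelian group of exponent dividing 4 and class at most 4,
the square of any element of the derived subgroup is central. -/
lemma key_central_sq {G : Type*} [Group G]
    (hexp : ∀ x : G, x ^ 4 = 1)
    (hmet : ∀ a ∈ (⊤ : Subgroup G).lowerCentralSeries 1, ∀ b ∈ (⊤ : Subgroup G).lowerCentralSeries 1, a * b = b * a)
    (hnil : (⊤ : Subgroup G).lowerCentralSeries 4 = ⊥) (c : G) (hc : c ∈ (⊤ : Subgroup G).lowerCentralSeries 1)
    (g : G) : g * c ^ 2 * g⁻¹ = c ^ 2 := by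
  have step : ∀ n (x : G), x ∈ (⊤ : Subgroup G).lowerCentralSeries n →
      ⁅g, x⁆ ∈ (⊤ : Subgroup G).lowerCentralSeries (n + 1) := by
    intro n x hx
    rw [← commutatorElement_inv]
    exact inv_mem (by
      show ⁅x, g⁆ ∈ ⁅(⊤ : Subgroup G).lowerCentralSeries n, (⊤ : Subgroup G)⁆
      exact Subgroup.commutator_mem_commutator hx (Subgroup.mem_top g))
  obtain ⟨c1, hc1def⟩ : ∃ x : G, x = ⁅g, c⁆ := ⟨_, rfl⟩
  obtain ⟨c2, hc2def⟩ : ∃ x : G, x = ⁅g, c1⁆ := ⟨_, rfl⟩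
  have hc1_2 : c1 ∈ (⊤ : Subgroup G).lowerCentralSeries 2 := hc1def ▸ step 1 c hc
  have hc2_3 : c2 ∈ (⊤ : Subgroup G).lowerCentralSeries 3 := hc2def ▸ step 2 c1 hc1_2
  have hc1H : c1 ∈ (⊤ : Subgroup G).lowerCentralSeries 1 := lowerCentralSeries_antitone _ (by norm_num) hc1_2
  have hc2H : c2 ∈ (⊤ : Subgroup G).lowerCentralSeries 1 := lowerCentralSeries_antitone _ (by norm_num) hc2_3
  -- c2 commutes with g, since ⁅g, c2⁆ ∈ γ₅ = 1
  have hgc2 : g * c2 * g⁻¹ = c2 := by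
    have h4 : ⁅g, c2⁆ ∈ (⊤ : Subgroup G).lowerCentralSeries 4 := step 3 c2 hc2_3
    rw [hnil, Subgroup.mem_bot, commutatorElement_eq_one_iff_mul_comm] at h4
    rw [h4]; group
  -- conjugation relations
  have hw1 : g * c * g⁻¹ = c1 * c := by rw [hc1def, commutatorElement_def]; group
  have hw1' : g * c1 * g⁻¹ = c2 * c1 := by rw [hc2def, commutatorElement_def]; group
  have hw2 : g * (g * c * g⁻¹) * g⁻¹ = c2 * c1 * (c1 * c) := by
    rw [hw1]
    calc g * (c1 * c) * g⁻¹ = (g * c1 * g⁻¹) * (g * c * g⁻¹) := by group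
      _ = c2 * c1 * (c1 * c) := by rw [hw1', hw1]
  have hw3 : g * (g * (g * c * g⁻¹) * g⁻¹) * g⁻¹
      = c2 * (c2 * c1) * (c2 * c1 * (c1 * c)) := by
    rw [hw2]
    calc g * (c2 * c1 * (c1 * c)) * g⁻¹
        = (g * c2 * g⁻¹) * ((g * c1 * g⁻¹) * ((g * c1 * g⁻¹) * (g * c * g⁻¹))) := by group
      _ = c2 * ((c2 * c1) * ((c2 * c1) * (c1 * c))) := by rw [hw1', hw1, hgc2]
      _ = c2 * (c2 * c1) * (c2 * c1 * (c1 * c)) := by group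
  have hw2' : g * (g * c1 * g⁻¹) * g⁻¹ = c2 * (c2 * c1) := by
    rw [hw1']
    calc g * (c2 * c1) * g⁻¹ = (g * c2 * g⁻¹) * (g * c1 * g⁻¹) := by group
      _ = c2 * (c2 * c1) := by rw [hw1', hgc2]
  have hw3' : g * (g * (g * c1 * g⁻¹) * g⁻¹) * g⁻¹ = c2 * (c2 * (c2 * c1)) := by
    rw [hw2']
    calc g * (c2 * (c2 * c1)) * g⁻¹
        = (g * c2 * g⁻¹) * ((g * c2 * g⁻¹) * (g * c1 * g⁻¹)) := by group
      _ = c2 * (c2 * (c2 * c1)) := by rw [hw1', hgc2]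
  -- the two fourth-power relations in G
  have hg4 : g * g * g * g = 1 := by rw [← pow_four_expand]; exact hexp g
  have hP : c * (c1 * c) * (c2 * c1 * (c1 * c)) * (c2 * (c2 * c1) * (c2 * c1 * (c1 * c))) = 1 := by
    have e : (c * g) ^ 4 = c * (g * c * g⁻¹) * (g * (g * c * g⁻¹) * g⁻¹)
        * (g * (g * (g * c * g⁻¹) * g⁻¹) * g⁻¹) * (g * g * g * g) := by
      rw [pow_four_expand]; group
    rw [hw3, hw2, hw1, hexp (c * g), hg4, mul_one] at e
    exact e.symm
  have hP' : c1 * (c2 * c1) * (c2 * (c2 * c1)) * (c2 * (c2 * (c2 * c1))) = 1 := by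
    have e : (c1 * g) ^ 4 = c1 * (g * c1 * g⁻¹) * (g * (g * c1 * g⁻¹) * g⁻¹)
        * (g * (g * (g * c1 * g⁻¹) * g⁻¹) * g⁻¹) * (g * g * g * g) := by
      rw [pow_four_expand]; group
    rw [hw3', hw2', hw1', hexp (c1 * g), hg4, mul_one] at e
    exact e.symm
  -- now work in the abelian subgroup H = γ₂
  haveI : IsMulCommutative ((⊤ : Subgroup G).lowerCentralSeries 1) :=
    ⟨⟨fun x y => Subtype.ext (hmet x x.2 y y.2)⟩⟩
  obtain ⟨C, hCdef⟩ : ∃ x : (⊤ : Subgroup G).lowerCentralSeries 1, x = ⟨c, hc⟩ := ⟨_, rfl⟩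
  obtain ⟨C1, hC1def⟩ : ∃ x : (⊤ : Subgroup G).lowerCentralSeries 1, x = ⟨c1, hc1H⟩ := ⟨_, rfl⟩
  obtain ⟨C2, hC2def⟩ : ∃ x : (⊤ : Subgroup G).lowerCentralSeries 1, x = ⟨c2, hc2H⟩ := ⟨_, rfl⟩
  have hCc : (C : G) = c := by rw [hCdef]
  have hC1c : (C1 : G) = c1 := by rw [hC1def]
  have hC2c : (C2 : G) = c2 := by rw [hC2def]
  have hC4 : C * C * C * C = 1 := by
    apply Subtype.ext
    show ((C : G)) * C * C * C = (1 : G)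
    rw [hCc, ← pow_four_expand]; exact hexp c
  have hC14 : C1 * C1 * C1 * C1 = 1 := by
    apply Subtype.ext
    show ((C1 : G)) * C1 * C1 * C1 = (1 : G)
    rw [hC1c, ← pow_four_expand]; exact hexp c1
  have hC24 : C2 * C2 * C2 * C2 = 1 := by
    apply Subtype.ext
    show ((C2 : G)) * C2 * C2 * C2 = (1 : G)
    rw [hC2c, ← pow_four_expand]; exact hexp c2
  have hE : C * (C1 * C) * (C2 * C1 * (C1 * C)) * (C2 * (C2 * C1) * (C2 * C1 * (C1 * C))) = 1 := by
    apply Subtype.ext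
    show ((C : G)) * ((C1 : G) * C) * ((C2 : G) * C1 * (C1 * C))
      * ((C2 : G) * (C2 * C1) * (C2 * C1 * (C1 * C))) = (1 : G)
    rw [hCc, hC1c, hC2c]; exact hP
  have hF : C1 * (C2 * C1) * (C2 * (C2 * C1)) * (C2 * (C2 * (C2 * C1))) = 1 := by
    apply Subtype.ext
    show ((C1 : G)) * ((C2 : G) * C1) * ((C2 : G) * (C2 * C1))
      * ((C2 : G) * (C2 * (C2 * C1))) = (1 : G)
    rw [hC1c, hC2c]; exact hP'
  -- derive C2² = 1
  have hC26 : C2 * C2 * C2 * C2 * C2 * C2 = 1 := by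
    have h : (C1 * C1 * C1 * C1) * (C2 * C2 * C2 * C2 * C2 * C2) = 1 := by
      rw [← hF]; ac_rfl
    rwa [hC14, one_mul] at h
  have hC2sq : C2 * C2 = 1 := by
    have h : C2 * C2 * (C2 * C2 * C2 * C2) = 1 := by rw [← hC26]; ac_rfl
    rwa [hC24, mul_one] at h
  -- derive C1² = 1
  have hC16 : C1 * C1 * C1 * C1 * C1 * C1 = 1 := by
    have h : (C * C * C * C) * (C1 * C1 * C1 * C1 * C1 * C1) * (C2 * C2 * C2 * C2) = 1 := by
      rw [← hE]; ac_rfl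
    rwa [hC4, one_mul, hC24, mul_one] at h
  have hC1sq : C1 * C1 = 1 := by
    have h : C1 * C1 * (C1 * C1 * C1 * C1) = 1 := by rw [← hC16]; ac_rfl
    rwa [hC14, mul_one] at h
  -- back to G
  have hc1sqG : c1 * c1 = 1 := by
    have h := congrArg (Subtype.val) hC1sq
    simpa only [Subgroup.coe_mul, Subgroup.coe_one, hC1c] using h
  have hcomm : c1 * c = c * c1 := hmet c1 hc1H c hc
  calc g * c ^ 2 * g⁻¹ = (g * c * g⁻¹) * (g * c * g⁻¹) := by rw [pow_two]; group
    _ = c1 * (c * c1) * c := by rw [hw1]; group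
    _ = c1 * (c1 * c) * c := by rw [hcomm]
    _ = (c1 * c1) * (c * c) := by group
    _ = c ^ 2 := by rw [hc1sqG, one_mul, pow_two]

theorem comm_sq_inv {G : Type*} [Group G]
    (hexp : ∀ x : G, x ^ 4 = 1)
    (hmet : ∀ a ∈ (⊤ : Subgroup G).lowerCentralSeries 1, ∀ b ∈ (⊤ : Subgroup G).lowerCentralSeries 1, a * b = b * a)
    (hnil : (⊤ : Subgroup G).lowerCentralSeries 4 = ⊥) (a b : G) :
    (paperComm a⁻¹ b) ^ 2 = (paperComm a b) ^ 2 ∧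
    (paperComm a b⁻¹) ^ 2 = (paperComm a b) ^ 2 := by
  obtain ⟨c, hcdef⟩ : ∃ x : G, x = paperComm a b := ⟨_, rfl⟩
  have hc : c ∈ (⊤ : Subgroup G).lowerCentralSeries 1 := by
    have h : c = ⁅a⁻¹, b⁻¹⁆ := by rw [hcdef, commutatorElement_def, paperComm]; group
    rw [h]
    show ⁅a⁻¹, b⁻¹⁆ ∈ ⁅(⊤ : Subgroup G), (⊤ : Subgroup G)⁆
    exact Subgroup.commutator_mem_commutator (Subgroup.mem_top _) (Subgroup.mem_top _)
  have key : ∀ g : G, g * c ^ 2 * g⁻¹ = c ^ 2 :=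
    fun g => key_central_sq hexp hmet hnil c hc g
  have hinv2 : (c⁻¹) ^ 2 = c ^ 2 := by
    have hsq : c ^ 2 * c ^ 2 = 1 := by
      rw [← pow_add]; exact hexp c
    rw [inv_pow]
    exact (eq_inv_of_mul_eq_one_left hsq).symm
  rw [← hcdef]
  constructor
  · have h1 : paperComm a⁻¹ b = a * c⁻¹ * a⁻¹ := by
      rw [hcdef, paperComm, paperComm]; group
    calc (paperComm a⁻¹ b) ^ 2 = a * (c⁻¹) ^ 2 * a⁻¹ := by rw [h1, pow_two, pow_two]; group
      _ = a * c ^ 2 * a⁻¹ := by rw [hinv2]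
      _ = c ^ 2 := key a
  · have h1 : paperComm a b⁻¹ = b * c⁻¹ * b⁻¹ := by
      rw [hcdef, paperComm, paperComm]; group
    calc (paperComm a b⁻¹) ^ 2 = b * (c⁻¹) ^ 2 * b⁻¹ := by rw [h1, pow_two, pow_two]; group
      _ = b * c ^ 2 * b⁻¹ := by rw [hinv2]
      _ = c ^ 2 := key b
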